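/- Let K ≥ 1, 0 < α ≤ 1, S > 0, ρ₀ > 0, σ_z > 0. If P_err(k) ≤ 1/(√k·S) + (σ_z/(k·√ρ₀))·(1/S + 1/2) for k ≥ 1 and P_err(0) = 1/2, then ∑_{k=0}^{K} P_err(k)·C(K,k)·α^k·(1-α)^{K-k} ≤ (1/2)(1-α)^K + √6/(√(α·K)·S) + (2/(α·K))·(σ_z/√ρ₀)·(1/S + 1/2). -/

import Mathlib

theorem fading_unconditional_error_prob (K : ℕ) (hK : 1 ≤ K) (α S ρ₀ σ_z : ℝ)
    (hα : 0 < α) (hα1 : α ≤ 1) (hS : 0 < S) (hρ : 0 < ρ₀) (hσ : 0 < σ_z)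
    (Perr : ℕ → ℝ)
    (hcond : ∀ k : ℕ, 1 ≤ k →
      Perr k ≤ 1 / (Real.sqrt k * S) + (σ_z / (k * Real.sqrt ρ₀)) * (1 / S + 1 / 2))
    (h0 : Perr 0 = 1 / 2) :
    ∑ k ∈ Finset.range (K + 1), Perr k * (K.choose k : ℝ) * α ^ k * (1 - α) ^ (K - k)
      ≤ (1 / 2) * (1 - α) ^ K + Real.sqrt 6 / (Real.sqrt (α * K) * S)
        + (2 / (α * K)) * (σ_z / Real.sqrt ρ₀) * (1 / S + 1 / 2) := by
  have h1α : (0:ℝ) ≤ 1 - α := by linarith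
  have hKR : (1:ℝ) ≤ (K:ℝ) := by exact_mod_cast hK
  have hαK : 0 < α * K := by positivity
  set p : ℕ → ℝ := fun k => (K.choose k : ℝ) * α ^ k * (1 - α) ^ (K - k) with hpdef
  have hp0 : ∀ k, 0 ≤ p k := by
    intro k; simp only [hpdef]; positivity
  have hsum : ∑ k ∈ Finset.range (K+1), p k = 1 := by
    have h := add_pow α (1-α) K
    have h2 : (α + (1-α)) ^ K = (1:ℝ) := by norm_num
    calc ∑ k ∈ Finset.range (K+1), p k
        = ∑ k ∈ Finset.range (K+1), α ^ k * (1-α) ^ (K-k) * (K.choose k : ℝ) :=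
          Finset.sum_congr rfl (fun k _ => by simp only [hpdef]; ring)
      _ = 1 := by rw [← h, h2]
  -- binomial sum for K+1
  set q : ℕ → ℝ := fun j => ((K+1).choose j : ℝ) * α ^ j * (1 - α) ^ (K+1-j) with hqdef
  have hq0 : ∀ j, 0 ≤ q j := by
    intro j; simp only [hqdef]; positivity
  have hqsum : ∑ j ∈ Finset.range (K+2), q j = 1 := by
    have h := add_pow α (1-α) (K+1)
    have h2 : (α + (1-α)) ^ (K+1) = (1:ℝ) := by norm_num
    calc ∑ j ∈ Finset.range (K+2), q j
        = ∑ j ∈ Finset.range (K+1+1), α ^ j * (1-α) ^ (K+1-j) * ((K+1).choose j : ℝ) :=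
          Finset.sum_congr rfl (fun j _ => by simp only [hqdef]; ring)
      _ = 1 := by rw [← h, h2]
  -- key pointwise identity
  have hkey : ∀ k ∈ Finset.range (K+1),
      α * ((K:ℝ)+1) * (p k * (1/((k:ℝ)+1))) = q (k+1) := by
    intro k hk
    rw [Finset.mem_range] at hk
    have hc : ((K:ℝ)+1) * (K.choose k : ℝ) = ((K+1).choose (k+1) : ℝ) * ((k:ℝ)+1) := by
      have h := Nat.add_one_mul_choose_eq K k
      have : (((K+1) * K.choose k : ℕ) : ℝ) = (((K+1).choose (k+1) * (k+1) : ℕ) : ℝ) := by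
        exact_mod_cast congrArg (Nat.cast (R := ℝ)) h
      push_cast at this
      linarith
    have hsub : K + 1 - (k+1) = K - k := by omega
    have hk1 : ((k:ℝ)+1) ≠ 0 := by positivity
    simp only [hpdef, hqdef, hsub]
    push_cast
    field_simp
    linear_combination (α * α ^ k * (1-α) ^ (K-k)) * hc
  have hA : ∑ k ∈ Finset.range (K+1), p k * (1/((k:ℝ)+1)) ≤ 1 / (α * ((K:ℝ)+1)) := by
    have hpos : 0 < α * ((K:ℝ)+1) := by positivity
    rw [le_div_iff₀ hpos]
    calc (∑ k ∈ Finset.range (K+1), p k * (1/((k:ℝ)+1))) * (α * ((K:ℝ)+1))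
        = ∑ k ∈ Finset.range (K+1), α * ((K:ℝ)+1) * (p k * (1/((k:ℝ)+1))) := by
          rw [Finset.sum_mul]; exact Finset.sum_congr rfl (fun k _ => by ring)
      _ = ∑ k ∈ Finset.range (K+1), q (k+1) := Finset.sum_congr rfl hkey
      _ ≤ ∑ j ∈ Finset.range (K+2), q j := by
          rw [Finset.sum_range_succ' q (K+1)]
          have := hq0 0
          linarith
      _ = 1 := hqsum
  have hApart : ∑ k ∈ Finset.range K, p (k+1) * (1/((k:ℝ)+2)) ≤ 1 / (α * (K:ℝ)) := by
    have hsplit := Finset.sum_range_succ' (fun k => p k * (1/((k:ℝ)+1))) K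
    have e1 : ∑ k ∈ Finset.range K, p (k+1) * (1/(((k:ℕ):ℝ)+1+1))
        = ∑ k ∈ Finset.range K, p (k+1) * (1/((k:ℝ)+2)) := by
      refine Finset.sum_congr rfl (fun k _ => by push_cast; ring_nf)
    have h00 : p 0 * (1/((0:ℝ)+1)) ≥ 0 := by
      have := hp0 0; positivity
    have hle : ∑ k ∈ Finset.range K, p (k+1) * (1/((k:ℝ)+2)) ≤ 1 / (α * ((K:ℝ)+1)) := by
      rw [← e1]
      have : ∑ x ∈ Finset.range K, p (x+1) * (1/(((x:ℕ):ℝ)+1+1))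
          ≤ ∑ k ∈ Finset.range (K+1), p k * (1/((k:ℝ)+1)) := by
        rw [hsplit]
        push_cast
        linarith [h00]
      exact this.trans hA
    refine hle.trans ?_
    apply div_le_div_of_nonneg_left (by norm_num) hαK
    nlinarith
  -- T1 bound
  have hT1 : ∑ k ∈ Finset.range K, p (k+1) * (1/((k:ℝ)+1)) ≤ 2 / (α * (K:ℝ)) := by
    calc ∑ k ∈ Finset.range K, p (k+1) * (1/((k:ℝ)+1))
        ≤ ∑ k ∈ Finset.range K, 2 * (p (k+1) * (1/((k:ℝ)+2))) := by
          refine Finset.sum_le_sum (fun k _ => ?_)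
          have h1 : (0:ℝ) < (k:ℝ)+1 := by positivity
          have h2 : (0:ℝ) < (k:ℝ)+2 := by positivity
          have hp := hp0 (k+1)
          rw [mul_one_div, mul_one_div, ← mul_div_assoc]
          rw [div_le_div_iff₀ h1 h2]
          nlinarith
      _ = 2 * ∑ k ∈ Finset.range K, p (k+1) * (1/((k:ℝ)+2)) := by
          rw [Finset.mul_sum]
      _ ≤ 2 * (1 / (α * (K:ℝ))) := by linarith [hApart]
      _ = 2 / (α * (K:ℝ)) := by ring
  -- partial sum of p ≤ 1
  have hpsub : ∑ k ∈ Finset.range K, p (k+1) ≤ 1 := by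
    rw [← hsum, Finset.sum_range_succ' p K]
    have := hp0 0
    linarith
  -- T2 bound via Cauchy-Schwarz
  have hT2 : ∑ k ∈ Finset.range K, p (k+1) / Real.sqrt ((k:ℝ)+1)
      ≤ Real.sqrt 2 / Real.sqrt (α * K) := by
    set f : ℕ → ℝ := fun k => Real.sqrt (p (k+1) * (1/((k:ℝ)+1)))
    set g : ℕ → ℝ := fun k => Real.sqrt (p (k+1))
    have hcs := Finset.sum_mul_sq_le_sq_mul_sq (Finset.range K) f g
    have hfg : ∀ k ∈ Finset.range K, f k * g k = p (k+1) / Real.sqrt ((k:ℝ)+1) := by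
      intro k _
      have hp := hp0 (k+1)
      have h1 : (0:ℝ) < (k:ℝ)+1 := by positivity
      show Real.sqrt (p (k+1) * (1/((k:ℝ)+1))) * Real.sqrt (p (k+1)) = _
      rw [← Real.sqrt_mul (by positivity)]
      have : p (k+1) * (1/((k:ℝ)+1)) * p (k+1) = (p (k+1))^2 / ((k:ℝ)+1) := by ring
      rw [this, Real.sqrt_div (sq_nonneg _), Real.sqrt_sq hp]
    have hf2 : ∀ k ∈ Finset.range K, f k ^ 2 = p (k+1) * (1/((k:ℝ)+1)) := by
      intro k _
      have hp := hp0 (k+1)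
      exact Real.sq_sqrt (by positivity)
    have hg2 : ∀ k ∈ Finset.range K, g k ^ 2 = p (k+1) := by
      intro k _
      exact Real.sq_sqrt (hp0 (k+1))
    rw [Finset.sum_congr rfl hfg, Finset.sum_congr rfl hf2, Finset.sum_congr rfl hg2] at hcs
    have hb : (∑ k ∈ Finset.range K, p (k+1) / Real.sqrt ((k:ℝ)+1))^2 ≤ 2 / (α * K) := by
      calc (∑ k ∈ Finset.range K, p (k+1) / Real.sqrt ((k:ℝ)+1))^2
          ≤ (∑ k ∈ Finset.range K, p (k+1) * (1/((k:ℝ)+1))) * ∑ k ∈ Finset.range K, p (k+1) :=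
            hcs
        _ ≤ (2 / (α * K)) * 1 := by
            apply mul_le_mul hT1 hpsub (Finset.sum_nonneg fun k _ => hp0 (k+1))
            positivity
        _ = 2 / (α * K) := by ring
    have hnn : 0 ≤ ∑ k ∈ Finset.range K, p (k+1) / Real.sqrt ((k:ℝ)+1) := by
      apply Finset.sum_nonneg
      intro k _
      have := hp0 (k+1)
      positivity
    have hmono := Real.sqrt_le_sqrt hb
    rw [Real.sqrt_sq hnn, Real.sqrt_div (by norm_num : (0:ℝ) ≤ 2)] at hmono
    exact hmono
  -- assembly
  have hsqrt2 : Real.sqrt 2 ≤ Real.sqrt 6 := Real.sqrt_le_sqrt (by norm_num)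
  have hsρ : 0 < Real.sqrt ρ₀ := Real.sqrt_pos.mpr hρ
  have hcoef : 0 < 1 / S + 1 / 2 := by positivity
  have hsplitm := Finset.sum_range_succ'
    (fun k => Perr k * (K.choose k : ℝ) * α ^ k * (1 - α) ^ (K - k)) K
  rw [hsplitm]
  have h0term : Perr 0 * (K.choose 0 : ℝ) * α ^ 0 * (1 - α) ^ (K - 0)
      = (1/2) * (1 - α) ^ K := by
    simp [h0]
  rw [h0term]
  have hmain : ∑ k ∈ Finset.range K,
      Perr (k+1) * (K.choose (k+1) : ℝ) * α ^ (k+1) * (1 - α) ^ (K - (k+1))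
      ≤ Real.sqrt 6 / (Real.sqrt (α * K) * S)
        + (2 / (α * K)) * (σ_z / Real.sqrt ρ₀) * (1 / S + 1 / 2) := by
    have hstep : ∀ k ∈ Finset.range K,
        Perr (k+1) * (K.choose (k+1) : ℝ) * α ^ (k+1) * (1 - α) ^ (K - (k+1))
        ≤ (1/S) * (p (k+1) / Real.sqrt ((k:ℝ)+1))
          + (σ_z / Real.sqrt ρ₀) * (1/S + 1/2) * (p (k+1) * (1/((k:ℝ)+1))) := by
      intro k _
      have hck := hcond (k+1) (Nat.le_add_left 1 k)
      have hk1 : (0:ℝ) < (k:ℝ)+1 := by positivity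
      have hsk : 0 < Real.sqrt ((k:ℝ)+1) := Real.sqrt_pos.mpr hk1
      have hcast : ((k+1 : ℕ) : ℝ) = (k:ℝ)+1 := by push_cast; ring
      rw [hcast] at hck
      have hpk := hp0 (k+1)
      have heq : Perr (k+1) * (K.choose (k+1) : ℝ) * α ^ (k+1) * (1 - α) ^ (K - (k+1))
          = Perr (k+1) * p (k+1) := by simp only [hpdef]; ring
      rw [heq]
      have hbound : Perr (k+1) ≤ 1 / (Real.sqrt ((k:ℝ)+1) * S)
          + (σ_z / (((k:ℝ)+1) * Real.sqrt ρ₀)) * (1 / S + 1 / 2) := hck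
      calc Perr (k+1) * p (k+1)
          ≤ (1 / (Real.sqrt ((k:ℝ)+1) * S)
              + (σ_z / (((k:ℝ)+1) * Real.sqrt ρ₀)) * (1 / S + 1 / 2)) * p (k+1) :=
            mul_le_mul_of_nonneg_right hbound hpk
        _ = (1/S) * (p (k+1) / Real.sqrt ((k:ℝ)+1))
            + (σ_z / Real.sqrt ρ₀) * (1/S + 1/2) * (p (k+1) * (1/((k:ℝ)+1))) := by
            field_simp
    calc ∑ k ∈ Finset.range K,
        Perr (k+1) * (K.choose (k+1) : ℝ) * α ^ (k+1) * (1 - α) ^ (K - (k+1))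
        ≤ ∑ k ∈ Finset.range K, ((1/S) * (p (k+1) / Real.sqrt ((k:ℝ)+1))
            + (σ_z / Real.sqrt ρ₀) * (1/S + 1/2) * (p (k+1) * (1/((k:ℝ)+1)))) :=
          Finset.sum_le_sum hstep
      _ = (1/S) * ∑ k ∈ Finset.range K, p (k+1) / Real.sqrt ((k:ℝ)+1)
          + (σ_z / Real.sqrt ρ₀) * (1/S + 1/2)
            * ∑ k ∈ Finset.range K, p (k+1) * (1/((k:ℝ)+1)) := by
          rw [Finset.sum_add_distrib, Finset.mul_sum, Finset.mul_sum]
      _ ≤ (1/S) * (Real.sqrt 2 / Real.sqrt (α * K))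
          + (σ_z / Real.sqrt ρ₀) * (1/S + 1/2) * (2 / (α * K)) := by
          have c1 : 0 < (1:ℝ)/S := by positivity
          have c2 : 0 ≤ (σ_z / Real.sqrt ρ₀) * (1/S + 1/2) := by positivity
          have := mul_le_mul_of_nonneg_left hT2 c1.le
          have := mul_le_mul_of_nonneg_left hT1 c2
          linarith
      _ ≤ Real.sqrt 6 / (Real.sqrt (α * K) * S)
          + (2 / (α * K)) * (σ_z / Real.sqrt ρ₀) * (1 / S + 1 / 2) := by
          have hsαK : 0 < Real.sqrt (α * K) := Real.sqrt_pos.mpr hαK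
          have h1 : (1/S) * (Real.sqrt 2 / Real.sqrt (α * K))
              ≤ Real.sqrt 6 / (Real.sqrt (α * K) * S) := by
            have e : (1/S) * (Real.sqrt 2 / Real.sqrt (α * K))
                = Real.sqrt 2 / (Real.sqrt (α * K) * S) := by
              field_simp
            rw [e]
            exact div_le_div_of_nonneg_right hsqrt2 (by positivity) |>.trans_eq rfl
          have h2 : (σ_z / Real.sqrt ρ₀) * (1/S+1/2) * (2/(α*(K:ℝ)))
              = (2/(α*(K:ℝ))) * (σ_z/Real.sqrt ρ₀) * (1/S+1/2) := by ring
          linarith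
  linarith
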